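/- Let X be a countably infinite set. There exists an injective map from the power set of the power set of ℕ into the set of precomplete clones on X; in particular, there exist 2^{2^{ℵ₀}} pairwise distinct precomplete clones on X. -/

import Mathlib

/-- The set of all finitary operations on `X`: an element of arity index `n`
is an `(n+1)`-ary operation, so that all arities are `≥ 1`. -/
abbrev Ops (X : Type) : Type := Σ n : ℕ, (Fin (n + 1) → X) → X

/-- `opImage f A` is the image `f[A^n]` of the `n`-th power of `A` under the
`n`-ary operation `f`. -/
def opImage {X : Type} (f : Ops X) (A : Set X) : Set X :=
  f.2 '' {x | ∀ i, x i ∈ A}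

/-- An ideal "in our sense": closed under subsets and finite unions, contains all
finite sets, contains at least one infinite set, and does not contain `X`. -/
def IsIdealInOurSense {X : Type} (I : Set (Set X)) : Prop :=
  (∀ A ∈ I, ∀ B ⊆ A, B ∈ I) ∧
  (∀ A ∈ I, ∀ B ∈ I, A ∪ B ∈ I) ∧
  (∀ A : Set X, A.Finite → A ∈ I) ∧
  (∃ A ∈ I, A.Infinite) ∧
  (Set.univ : Set X) ∉ I

/-- The clone `C_I` induced by a collection of sets `I`: all operations mapping
powers of `I`-sets into `I`. -/
def idealClone {X : Type} (I : Set (Set X)) : Set (Ops X) :=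
  {f | ∀ A ∈ I, opImage f A ∈ I}

/-- The unary part `C_I^{(1)}` of the clone induced by `I`. -/
def unaryPart {X : Type} (I : Set (Set X)) : Set (X → X) :=
  {f | ∀ A ∈ I, f '' A ∈ I}

/-- A clone: a set of finitary operations containing all projections and closed
under composition. -/
def IsClone {X : Type} (C : Set (Ops X)) : Prop :=
  (∀ (n : ℕ) (i : Fin (n + 1)), (⟨n, fun x => x i⟩ : Ops X) ∈ C) ∧
  ∀ (n m : ℕ) (f : (Fin (n + 1) → X) → X) (g : Fin (n + 1) → (Fin (m + 1) → X) → X),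
    (⟨n, f⟩ : Ops X) ∈ C → (∀ i, (⟨m, g i⟩ : Ops X) ∈ C) →
    (⟨m, fun x => f fun i => g i x⟩ : Ops X) ∈ C

/-- The clone generated by a set of operations. -/
def cloneGen {X : Type} (F : Set (Ops X)) : Set (Ops X) :=
  ⋂₀ {C : Set (Ops X) | IsClone C ∧ F ⊆ C}

/-- A precomplete clone: a proper clone whose only proper cover is the full clone `O`. -/
def IsPrecompleteClone {X : Type} (C : Set (Ops X)) : Prop :=
  IsClone C ∧ C ≠ Set.univ ∧
  ∀ D : Set (Ops X), IsClone D → C ⊂ D → D = Set.univ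

/-- The regularization `Î` of `I`: all sets `A` such that every infinite subset
of `A` contains an infinite member of `I`. -/
def regularization {X : Type} (I : Set (Set X)) : Set (Set X) :=
  {A | ∀ B ⊆ A, B.Infinite → ∃ C ⊆ B, C.Infinite ∧ C ∈ I}

section Part1
variable {X : Type}

lemma ideal_finunion {J : Set (Set X)} (hJ : IsIdealInOurSense J) {A B : Set X}
    (hA : A ∈ J) (hB : B.Finite) : A ∪ B ∈ J :=
  hJ.2.1 A hA B (hJ.2.2.1 B hB)

lemma ideal_biUnion {J : Set (Set X)} (hJ : IsIdealInOurSense J) {ι : Type*}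
    (s : Finset ι) (f : ι → Set X) (hf : ∀ i ∈ s, f i ∈ J) :
    (⋃ i ∈ s, f i) ∈ J := by
  classical
  induction s using Finset.induction with
  | empty => simpa using hJ.2.2.1 ∅ Set.finite_empty
  | @insert a s ha ih =>
    rw [Finset.set_biUnion_insert]
    exact hJ.2.1 _ (hf a (Finset.mem_insert_self a s)) _
      (ih fun i hi => hf i (Finset.mem_insert_of_mem hi))

lemma ideal_iUnion_fin {J : Set (Set X)} (hJ : IsIdealInOurSense J) {n : ℕ}
    (f : Fin (n + 1) → Set X) (hf : ∀ i, f i ∈ J) : (⋃ i, f i) ∈ J := by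
  have h : (⋃ i, f i) = ⋃ i ∈ (Finset.univ : Finset (Fin (n + 1))), f i := by simp
  rw [h]; exact ideal_biUnion hJ _ _ fun i _ => hf i

lemma isClone_idealClone {J : Set (Set X)} (hJ : IsIdealInOurSense J) :
    IsClone (idealClone J) := by
  constructor
  · intro n i A hA
    have h : opImage (⟨n, fun x => x i⟩ : Ops X) A ⊆ A := by
      rintro _ ⟨x, hx, rfl⟩; exact hx i
    exact hJ.1 A hA _ h
  · intro n m f g hf hg A hA
    have hBJ : (⋃ i, opImage (⟨m, g i⟩ : Ops X) A) ∈ J :=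
      ideal_iUnion_fin hJ _ fun i => hg i A hA
    have hsub : opImage (⟨m, fun x => f fun i => g i x⟩ : Ops X) A ⊆
        opImage (⟨n, f⟩ : Ops X) (⋃ i, opImage (⟨m, g i⟩ : Ops X) A) := by
      rintro _ ⟨x, hx, rfl⟩
      exact ⟨fun i => g i x, fun i => Set.mem_iUnion.2 ⟨i, ⟨x, hx, rfl⟩⟩, rfl⟩
    exact hJ.1 _ (hf _ hBJ) _ hsub

lemma opImage_unary (f : X → X) (A : Set X) :
    opImage (⟨0, fun v => f (v 0)⟩ : Ops X) A = f '' A := by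
  ext y
  constructor
  · rintro ⟨v, hv, rfl⟩; exact ⟨v 0, hv 0, rfl⟩
  · rintro ⟨a, ha, rfl⟩; exact ⟨fun _ => a, fun _ => ha, rfl⟩

lemma unary_mem_idealClone {J : Set (Set X)} {f : X → X}
    (h : ∀ C ∈ J, f '' C ∈ J) : (⟨0, fun v => f (v 0)⟩ : Ops X) ∈ idealClone J := by
  intro C hC; rw [opImage_unary]; exact h C hC

lemma opImage_finite {f : Ops X} {A : Set X} (hA : A.Finite) : (opImage f A).Finite := by
  apply Set.Finite.image
  have h : {x : Fin (f.1 + 1) → X | ∀ i, x i ∈ A} = Set.pi Set.univ (fun _ => A) := by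
    ext x; simp [Set.mem_pi]
  rw [h]
  exact Set.Finite.pi fun _ => hA

lemma exists_surjOn_id [Countable X] [Infinite X] {A : Set X} (hA : A.Infinite) :
    ∃ f : X → X, f '' A = Set.univ ∧ ∀ x ∉ A, f x = x := by
  classical
  have h1 : Infinite ↥A := hA.to_subtype
  obtain ⟨eA⟩ : Nonempty (↥A ≃ ℕ) := nonempty_equiv_of_countable
  obtain ⟨eX⟩ : Nonempty (X ≃ ℕ) := nonempty_equiv_of_countable
  refine ⟨fun x => if h : x ∈ A then eX.symm (eA ⟨x, h⟩) else x, ?_, ?_⟩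
  · apply Set.eq_univ_of_forall
    intro y
    refine ⟨(eA.symm (eX y) : X), (eA.symm (eX y)).2, ?_⟩
    beta_reduce
    rw [dif_pos (eA.symm (eX y)).2]
    simp
  · intro x hx; beta_reduce; rw [dif_neg hx]
end Part1
section Part2
variable {X : Type}

theorem idealClone_precomplete [Countable X] [Infinite X] {J : Set (Set X)}
    (hJ : IsIdealInOurSense J)
    (hFree : ∀ B : Set X, B ∉ J → ∃ T ⊆ B, T.Infinite ∧ ∀ C ⊆ T, C ∈ J → C.Finite) :
    IsPrecompleteClone (idealClone J) := by
  classical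
  refine ⟨isClone_idealClone hJ, ?_, ?_⟩
  · -- properness
    obtain ⟨A, hAJ, hAinf⟩ := hJ.2.2.2.1
    obtain ⟨f, hf, -⟩ := exists_surjOn_id hAinf
    intro hEq
    have hmem : (⟨0, fun v => f (v 0)⟩ : Ops X) ∈ idealClone J := by
      rw [hEq]; trivial
    have h2 := hmem A hAJ
    rw [opImage_unary, hf] at h2
    exact hJ.2.2.2.2 h2
  · intro D hD hsub
    obtain ⟨g, hgD, hgC⟩ := Set.exists_of_ssubset hsub
    obtain ⟨n, g₂⟩ := g
    simp only [idealClone, Set.mem_setOf_eq, not_forall] at hgC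
    obtain ⟨A, hAJ, hBJ⟩ := hgC
    -- A is infinite
    have hAinf : A.Infinite := by
      by_contra hfin
      rw [Set.not_infinite] at hfin
      exact hBJ (hJ.2.2.1 _ (opImage_finite hfin))
    have hAne : A.Nonempty := hAinf.nonempty
    obtain ⟨a₀, ha₀⟩ := hAne
    -- tuple coding inside A
    have hInfA : Infinite ↥A := hAinf.to_subtype
    obtain ⟨ψ⟩ : Nonempty (↥A ≃ (Fin (n + 1) → ↥A)) := by
      obtain ⟨e1⟩ : Nonempty (↥A ≃ ℕ) := nonempty_equiv_of_countable
      obtain ⟨e2⟩ : Nonempty ((Fin (n + 1) → ↥A) ≃ ℕ) := nonempty_equiv_of_countable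
      exact ⟨e1.trans e2.symm⟩
    set u : Fin (n + 1) → X → X :=
      fun i x => if h : x ∈ A then (ψ ⟨x, h⟩ i : X) else a₀ with hu
    have huA : ∀ i x, u i x ∈ A := by
      intro i x
      by_cases h : x ∈ A
      · simp only [hu, dif_pos h]; exact (ψ ⟨x, h⟩ i).2
      · simp only [hu, dif_neg h]; exact ha₀
    have huop : ∀ i, (⟨0, fun v => u i (v 0)⟩ : Ops X) ∈ idealClone J := by
      intro i
      apply unary_mem_idealClone
      intro C hC
      apply hJ.1 A hAJ
      rintro _ ⟨x, -, rfl⟩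
      exact huA i x
    set hfun : X → X := fun x => g₂ (fun i => u i x) with hhfun
    have hopD : (⟨0, fun v : Fin 1 → X => hfun (v 0)⟩ : Ops X) ∈ D := by
      have := hD.2 n 0 g₂ (fun i => fun v : Fin 1 → X => u i (v 0)) hgD
        (fun i => hsub.subset (huop i))
      exact this
    -- image of A under hfun is the opImage
    have himg : hfun '' A = opImage (⟨n, g₂⟩ : Ops X) A := by
      ext y
      constructor
      · rintro ⟨x, hx, rfl⟩
        exact ⟨fun i => u i x, fun i => huA i x, rfl⟩
      · rintro ⟨v, hv, rfl⟩
        refine ⟨(ψ.symm (fun i => ⟨v i, hv i⟩) : X), (ψ.symm _).2, ?_⟩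
        simp only [hhfun]
        congr 1
        funext i
        have : u i (ψ.symm (fun i => ⟨v i, hv i⟩) : X) =
            ((ψ (ψ.symm (fun i => ⟨v i, hv i⟩))) i : X) := by
          simp only [hu, dif_pos (ψ.symm (fun i => ⟨v i, hv i⟩)).2, Subtype.coe_eta]
        rw [this, Equiv.apply_symm_apply]
    have hBnotJ : hfun '' A ∉ J := by rw [himg]; exact hBJ
    obtain ⟨T, hTB, hTinf, hTfree⟩ := hFree _ hBnotJ
    -- transversal
    have hz : ∀ y : ↥T, ∃ x, x ∈ A ∧ hfun x = (y : X) := by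
      intro y
      obtain ⟨x, hx, hfx⟩ := hTB y.2
      exact ⟨x, hx, hfx⟩
    choose z hz1 hz2 using hz
    -- now show D = univ
    apply Set.eq_univ_of_forall
    rintro ⟨m, f₂⟩
    obtain ⟨enc, henc⟩ := exists_injective_nat (Fin (m + 1) → X)
    have hTI : Infinite ↥T := hTinf.to_subtype
    obtain ⟨eT⟩ : Nonempty (↥T ≃ ℕ) := nonempty_equiv_of_countable
    set t : (Fin (m + 1) → X) → X := fun v => z (eT.symm (enc v)) with ht
    set w : (Fin (m + 1) → X) → X := fun v => hfun (t v) with hw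
    have hwT : ∀ v, w v ∈ T := fun v => by
      rw [hw]; beta_reduce; rw [hz2]; exact (eT.symm (enc v)).2
    have hwinj : Function.Injective w := by
      intro v v' hvv
      have : ((eT.symm (enc v)) : X) = ((eT.symm (enc v')) : X) := by
        rw [← hz2, ← hz2]; exact hvv
      have h2 : eT.symm (enc v) = eT.symm (enc v') := Subtype.ext this
      exact henc (eT.symm.injective h2)
    set dec : X → X := fun y => if h : ∃ v, w v = y then f₂ h.choose else y with hdec
    have hdecJ : (⟨0, fun v : Fin 1 → X => dec (v 0)⟩ : Ops X) ∈ idealClone J := by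
      apply unary_mem_idealClone
      intro C hC
      have hsplit : dec '' C ⊆ C ∪ dec '' (C ∩ T) := by
        rintro _ ⟨c, hc, rfl⟩
        by_cases h : ∃ v, w v = c
        · right
          refine ⟨c, ⟨hc, ?_⟩, rfl⟩
          obtain ⟨v, hv⟩ := h
          rw [← hv]; exact hwT v
        · left
          simp only [hdec, dif_neg h]
          exact hc
      have hCT : (C ∩ T).Finite := hTfree _ Set.inter_subset_right (hJ.1 C hC _ Set.inter_subset_left)
      exact hJ.1 _ (ideal_finunion hJ hC (hCT.image dec)) _ hsplit
    have htopJ : (⟨m, fun v => t v⟩ : Ops X) ∈ idealClone J := by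
      intro C hC
      apply hJ.1 A hAJ
      rintro _ ⟨v, -, rfl⟩
      exact hz1 _
    have step1 : (⟨m, fun v => hfun (t v)⟩ : Ops X) ∈ D := by
      have := hD.2 0 m (fun vv : Fin 1 → X => hfun (vv 0))
        (fun _ => fun v => t v) hopD (fun _ => hsub.subset htopJ)
      exact this
    have step2 : (⟨m, fun v => dec (hfun (t v))⟩ : Ops X) ∈ D := by
      have := hD.2 0 m (fun vv : Fin 1 → X => dec (vv 0))
        (fun _ => fun v => hfun (t v)) (hsub.subset hdecJ) (fun _ => step1)
      exact this
    have hfinal : (fun v => dec (hfun (t v))) = f₂ := by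
      funext v
      have hex : ∃ v', w v' = w v := ⟨v, rfl⟩
      have : dec (w v) = f₂ hex.choose := dif_pos hex
      have h2 : hex.choose = v := hwinj hex.choose_spec
      calc dec (hfun (t v)) = dec (w v) := rfl
        _ = f₂ hex.choose := this
        _ = f₂ v := by rw [h2]
    rw [hfinal] at step2
    exact step2
end Part2
section Part3
variable {X : Type}

lemma subset_regularization {I : Set (Set X)} (hdown : ∀ A ∈ I, ∀ B ⊆ A, B ∈ I) :
    I ⊆ regularization I := by
  intro A hA B hBA hBinf
  exact ⟨B, subset_rfl, hBinf, hdown A hA B hBA⟩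

lemma regularization_down {I : Set (Set X)} :
    ∀ A ∈ regularization I, ∀ B ⊆ A, B ∈ regularization I := by
  intro A hA B hBA C hCB hCinf
  exact hA C (hCB.trans hBA) hCinf

lemma regularization_union {I : Set (Set X)} :
    ∀ A ∈ regularization I, ∀ B ∈ regularization I, A ∪ B ∈ regularization I := by
  intro A hA B hB C hCAB hCinf
  have hor : (C ∩ A).Infinite ∨ (C ∩ B).Infinite := by
    by_contra hcon
    push_neg at hcon
    have hsub : C ⊆ (C ∩ A) ∪ (C ∩ B) := by
      intro x hx
      rcases hCAB hx with h | h
      · exact Or.inl ⟨hx, h⟩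
      · exact Or.inr ⟨hx, h⟩
    exact hCinf ((hcon.1.union hcon.2).subset hsub)
  rcases hor with h | h
  · obtain ⟨C', hC'sub, hC'inf, hC'I⟩ := hA (C ∩ A) Set.inter_subset_right h
    exact ⟨C', hC'sub.trans Set.inter_subset_left, hC'inf, hC'I⟩
  · obtain ⟨C', hC'sub, hC'inf, hC'I⟩ := hB (C ∩ B) Set.inter_subset_right h
    exact ⟨C', hC'sub.trans Set.inter_subset_left, hC'inf, hC'I⟩

lemma regularization_finite {I : Set (Set X)} {A : Set X} (hA : A.Finite) :
    A ∈ regularization I := by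
  intro B hBA hBinf
  exact (hBinf (hA.subset hBA)).elim

lemma regularization_free {I : Set (Set X)} {B : Set X} (hB : B ∉ regularization I) :
    ∃ T ⊆ B, T.Infinite ∧ ∀ C ⊆ T, C ∈ regularization I → C.Finite := by
  simp only [regularization, Set.mem_setOf_eq, not_forall] at hB
  obtain ⟨T, hTB, hTinf, hTno⟩ := hB
  push_neg at hTno
  refine ⟨T, hTB, hTinf, ?_⟩
  intro C hCT hCreg
  by_contra hCinf
  rw [← Set.not_infinite, not_not] at hCinf
  obtain ⟨C', hC'C, hC'inf, hC'I⟩ := hCreg C subset_rfl hCinf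
  exact hTno C' (hC'C.trans hCT) hC'inf hC'I
end Part3
section Part4
variable {X : Type}

open Classical in
noncomputable def seg (r : Set ℕ) (k : ℕ) : List Bool :=
  (List.range k).map (fun i => if i ∈ r then true else false)

lemma seg_length (r : Set ℕ) (k : ℕ) : (seg r k).length = k := by simp [seg]

lemma seg_eq {r r' : Set ℕ} {k k' : ℕ} (h : seg r k = seg r' k') :
    k = k' ∧ ∀ i < k, (i ∈ r ↔ i ∈ r') := by
  classical
  have hk : k = k' := by
    have := congrArg List.length h
    simpa [seg_length] using this
  subst hk
  refine ⟨rfl, ?_⟩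
  intro i hi
  have h2 : ∀ a ∈ List.range k,
      (if a ∈ r then true else false) = (if a ∈ r' then true else false) := by
    rw [← List.map_inj_left]; exact h
  have h3 := h2 i (List.mem_range.2 hi)
  by_cases h1 : i ∈ r <;> by_cases h2' : i ∈ r' <;> simp [h1, h2'] at h3 ⊢

def Ecode (e : ℕ ≃ X) (l : List Bool) : X := e (2 * Encodable.encode l)

lemma Ecode_inj (e : ℕ ≃ X) : Function.Injective (Ecode e) := by
  intro a b h
  have h2 : 2 * Encodable.encode a = 2 * Encodable.encode b := e.injective h
  exact Encodable.encode_injective (by omega)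

/-- branch sets -/
def Abr (e : ℕ ≃ X) (r : Set ℕ) : Set X := Set.range (fun k => Ecode e (seg r k))

lemma Abr_subset_range (e : ℕ ≃ X) (r : Set ℕ) : Abr e r ⊆ Set.range (Ecode e) := by
  rintro _ ⟨k, rfl⟩; exact ⟨seg r k, rfl⟩

lemma Abr_infinite (e : ℕ ≃ X) (r : Set ℕ) : (Abr e r).Infinite := by
  apply Set.infinite_range_of_injective
  intro k k' h
  exact (seg_eq (Ecode_inj e h)).1

lemma Abr_almost_disjoint (e : ℕ ≃ X) {r r' : Set ℕ} (hne : r ≠ r') :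
    (Abr e r ∩ Abr e r').Finite := by
  obtain ⟨n, hn⟩ : ∃ n, ¬(n ∈ r ↔ n ∈ r') := by
    by_contra hcon
    push_neg at hcon
    exact hne (Set.ext fun n => hcon n)
  have hsub : Abr e r ∩ Abr e r' ⊆ (fun k => Ecode e (seg r k)) '' {k | k ≤ n} := by
    rintro x ⟨⟨k, rfl⟩, ⟨k', hk'⟩⟩
    have hseg := seg_eq (Ecode_inj e hk'.symm)
    refine ⟨k, ?_, rfl⟩
    simp only [Set.mem_setOf_eq]
    by_contra hgt
    push_neg at hgt
    exact hn (hseg.2 n hgt)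
  exact ((Set.finite_le_nat n).image _).subset hsub

/-- non-code part -/
def Bset (e : ℕ ≃ X) : Set X := (Set.range (Ecode e))ᶜ

lemma Bset_infinite (e : ℕ ≃ X) : (Bset e).Infinite := by
  have hsub : Set.range (fun j : ℕ => e (2 * j + 1)) ⊆ Bset e := by
    rintro _ ⟨j, rfl⟩
    intro hmem
    obtain ⟨l, hl⟩ := hmem
    have : 2 * Encodable.encode l = 2 * j + 1 := e.injective hl
    omega
  apply Set.Infinite.mono hsub
  apply Set.infinite_range_of_injective
  intro a b h
  have := e.injective h
  omega

/-- the branch ideal generated by `S` -/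
def Iid (e : ℕ ≃ X) (S : Set (Set ℕ)) : Set (Set X) :=
  {A | ∃ F : Finset (Set ℕ), ↑F ⊆ S ∧ (A \ (Bset e ∪ ⋃ r ∈ F, Abr e r)).Finite}

lemma Iid_down (e : ℕ ≃ X) (S : Set (Set ℕ)) :
    ∀ A ∈ Iid e S, ∀ B ⊆ A, B ∈ Iid e S := by
  rintro A ⟨F, hFS, hfin⟩ B hBA
  exact ⟨F, hFS, hfin.subset (Set.diff_subset_diff_left hBA)⟩

lemma Iid_finite (e : ℕ ≃ X) (S : Set (Set ℕ)) {A : Set X} (hA : A.Finite) :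
    A ∈ Iid e S :=
  ⟨∅, by simp, hA.subset Set.diff_subset⟩

lemma Bset_mem_Iid (e : ℕ ≃ X) (S : Set (Set ℕ)) : Bset e ∈ Iid e S := by
  refine ⟨∅, by simp, ?_⟩
  have : Bset e \ (Bset e ∪ ⋃ r ∈ (∅ : Finset (Set ℕ)), Abr e r) = ∅ := by
    simp
  rw [this]
  exact Set.finite_empty

/-- the regular ideal -/
def Jid (e : ℕ ≃ X) (S : Set (Set ℕ)) : Set (Set X) := regularization (Iid e S)

/-- key decomposition: a subset of the codes that is in `Iid e S` and meets
the relevant branch sets finitely is finite -/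
lemma Iid_free_of_thin (e : ℕ ≃ X) (S : Set (Set ℕ)) {C : Set X}
    (hCB : C ∩ Bset e = ∅) (hthin : ∀ r ∈ S, (C ∩ Abr e r).Finite)
    (hC : C ∈ Iid e S) : C.Finite := by
  obtain ⟨F, hFS, hfin⟩ := hC
  have hsub : C ⊆ (C \ (Bset e ∪ ⋃ r ∈ F, Abr e r)) ∪ ((C ∩ Bset e) ∪ ⋃ r ∈ F, C ∩ Abr e r) := by
    intro x hx
    by_cases h : x ∈ Bset e ∪ ⋃ r ∈ F, Abr e r
    · right
      rcases h with h | h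
      · exact Or.inl ⟨hx, h⟩
      · right
        simp only [Set.mem_iUnion] at h ⊢
        obtain ⟨r, hrF, hr⟩ := h
        exact ⟨r, hrF, hx, hr⟩
    · exact Or.inl ⟨hx, h⟩
  apply Set.Finite.subset _ hsub
  apply hfin.union
  apply Set.Finite.union
  · rw [hCB]; exact Set.finite_empty
  · apply Set.Finite.biUnion F.finite_toSet
    intro r hrF
    exact hthin r (hFS hrF)

/-- the diagonal antichain -/
def Dset (e : ℕ ≃ X) : Set X := Set.range (fun k => Ecode e (seg ({k} : Set ℕ) (k + 1)))

lemma Dset_infinite (e : ℕ ≃ X) : (Dset e).Infinite := by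
  apply Set.infinite_range_of_injective
  intro k k' h
  have := (seg_eq (Ecode_inj e h)).1
  omega

lemma Dset_char (e : ℕ ≃ X) {k : ℕ} {r : Set ℕ}
    (h : Ecode e (seg ({k} : Set ℕ) (k + 1)) ∈ Abr e r) :
    k ∈ r ∧ ∀ i < k, i ∉ r := by
  obtain ⟨m, hm⟩ := h
  obtain ⟨hlen, hiff⟩ := seg_eq (Ecode_inj e hm)
  subst hlen
  constructor
  · exact (hiff k (by omega)).2 rfl
  · intro i hik hir
    have hik2 : i ∈ ({k} : Set ℕ) := (hiff i (by omega)).1 hir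
    simp only [Set.mem_singleton_iff] at hik2
    omega

lemma Dset_inter_Abr (e : ℕ ≃ X) (r : Set ℕ) : (Dset e ∩ Abr e r).Subsingleton := by
  rintro x ⟨⟨k, rfl⟩, hx2⟩ y ⟨⟨k', rfl⟩, hy2⟩
  have h1 := Dset_char e hx2
  have h2 := Dset_char e hy2
  have : k = k' := by
    by_contra hne
    rcases Nat.lt_or_ge k k' with h | h
    · exact h2.2 k h h1.1
    · exact h1.2 k' (by omega) h2.1
  rw [this]

lemma Dset_free (e : ℕ ≃ X) (S : Set (Set ℕ)) {C : Set X} (hCD : C ⊆ Dset e)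
    (hC : C ∈ Iid e S) : C.Finite := by
  apply Iid_free_of_thin e S _ _ hC
  · apply Set.eq_empty_of_subset_empty
    rintro x ⟨hx1, hx2⟩
    obtain ⟨k, hk⟩ := hCD hx1
    exact (hx2 ⟨_, hk⟩).elim
  · intro r _
    apply Set.Subsingleton.finite
    intro x hx y hy
    exact Dset_inter_Abr e r ⟨hCD hx.1, hx.2⟩ ⟨hCD hy.1, hy.2⟩
end Part4
section Part5
variable {X : Type}

lemma Jid_isIdeal (e : ℕ ≃ X) (S : Set (Set ℕ)) : IsIdealInOurSense (Jid e S) := by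
  refine ⟨regularization_down, regularization_union, fun A hA => regularization_finite hA, ?_, ?_⟩
  · exact ⟨Bset e, subset_regularization (Iid_down e S) (Bset_mem_Iid e S), Bset_infinite e⟩
  · intro huniv
    obtain ⟨C, hCD, hCinf, hCI⟩ := huniv (Dset e) (Set.subset_univ _) (Dset_infinite e)
    exact hCinf (Dset_free e S hCD hCI)

lemma Abr_mem_Jid (e : ℕ ≃ X) {S : Set (Set ℕ)} {r : Set ℕ} (hr : r ∈ S) :
    Abr e r ∈ Jid e S := by
  apply subset_regularization (Iid_down e S)
  classical
  refine ⟨{r}, by simpa using hr, ?_⟩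
  have h : Abr e r \ (Bset e ∪ ⋃ r' ∈ ({r} : Finset (Set ℕ)), Abr e r') = ∅ := by
    apply Set.eq_empty_of_subset_empty
    rintro x ⟨hx1, hx2⟩
    exact (hx2 (Or.inr (by simpa using hx1))).elim
  rw [h]
  exact Set.finite_empty

lemma Abr_free_Iid (e : ℕ ≃ X) {S : Set (Set ℕ)} {r : Set ℕ} (hr : r ∉ S) {C : Set X}
    (hCA : C ⊆ Abr e r) (hC : C ∈ Iid e S) : C.Finite := by
  apply Iid_free_of_thin e S _ _ hC
  · apply Set.eq_empty_of_subset_empty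
    rintro x ⟨hx1, hx2⟩
    exact (hx2 (Abr_subset_range e r (hCA hx1))).elim
  · intro r' hr'
    have hne : r ≠ r' := by rintro rfl; exact hr hr'
    apply Set.Finite.subset (Abr_almost_disjoint e hne)
    rintro x ⟨hx1, hx2⟩
    exact ⟨hCA hx1, hx2⟩

lemma Abr_free_Jid (e : ℕ ≃ X) {S : Set (Set ℕ)} {r : Set ℕ} (hr : r ∉ S) {C : Set X}
    (hCA : C ⊆ Abr e r) (hC : C ∈ Jid e S) : C.Finite := by
  by_contra hCfin
  rw [← Set.not_infinite, not_not] at hCfin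
  obtain ⟨C', hC'C, hC'inf, hC'I⟩ := hC C subset_rfl hCfin
  exact hC'inf (Abr_free_Iid e hr (hC'C.trans hCA) hC'I)

lemma sep_clones [Countable X] [Infinite X] (e : ℕ ≃ X) {S S' : Set (Set ℕ)} {r : Set ℕ}
    (hr : r ∈ S) (hr' : r ∉ S') : idealClone (Jid e S) ≠ idealClone (Jid e S') := by
  obtain ⟨f, hfim, hfid⟩ := exists_surjOn_id (Abr_infinite e r)
  have hmem' : (⟨0, fun v => f (v 0)⟩ : Ops X) ∈ idealClone (Jid e S') := by
    apply unary_mem_idealClone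
    intro C hC
    have hsplit : f '' C ⊆ C ∪ f '' (C ∩ Abr e r) := by
      rintro _ ⟨c, hc, rfl⟩
      by_cases h : c ∈ Abr e r
      · exact Or.inr ⟨c, ⟨hc, h⟩, rfl⟩
      · rw [hfid c h]; exact Or.inl hc
    have hfin : (C ∩ Abr e r).Finite :=
      Abr_free_Jid e hr' Set.inter_subset_right ((Jid_isIdeal e S').1 C hC _ Set.inter_subset_left)
    exact (Jid_isIdeal e S').1 _ (ideal_finunion (Jid_isIdeal e S') hC (hfin.image f)) _ hsplit
  have hmem : (⟨0, fun v => f (v 0)⟩ : Ops X) ∉ idealClone (Jid e S) := by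
    intro hmem
    have h2 := hmem (Abr e r) (Abr_mem_Jid e hr)
    rw [opImage_unary, hfim] at h2
    exact (Jid_isIdeal e S).2.2.2.2 h2
  intro hEq
  rw [hEq] at hmem
  exact hmem hmem'
end Part5


/-- There is an injection from `P(P(ℕ))` into the set of precomplete clones on
a countably infinite set: there are `2^{2^{ℵ₀}}` precomplete clones. -/
theorem stmt11 {X : Type} [Countable X] [Infinite X] :
    ∃ Φ : Set (Set ℕ) → Set (Ops X),
      Function.Injective Φ ∧ ∀ s, IsPrecompleteClone (Φ s) := by
  obtain ⟨e⟩ : Nonempty (ℕ ≃ X) := nonempty_equiv_of_countable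
  refine ⟨fun S => idealClone (Jid e S), ?_, ?_⟩
  · intro S S' hSS
    by_contra hne
    have h1 : ¬ (S ⊆ S') ∨ ¬ (S' ⊆ S) := by
      by_contra hc
      push_neg at hc
      exact hne (Set.Subset.antisymm hc.1 hc.2)
    rcases h1 with h | h
    · obtain ⟨r, hr, hr'⟩ := Set.not_subset.1 h
      exact sep_clones e hr hr' hSS
    · obtain ⟨r, hr, hr'⟩ := Set.not_subset.1 h
      exact sep_clones e hr hr' hSS.symm
  · intro S
    exact idealClone_precomplete (Jid_isIdeal e S) (fun B hB => regularization_free hB)
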